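/- Let L > 0 and 0 < μ_p ≤ L, and take μ = 0, so c = μ + L + √(μ² − Lμ + L²) = 2L. Define h : (0, 2/L) → ℝ by: h(t) = [ (μ_p(1 − Lt) + √(L² − L μ_p² t(2 − Lt))) / (L + μ_p) ]² for t ∈ (0, 1/L); h(t) = (2μ_p t(2 − Lt))/((L − μ_p)t − 2) + 1 for t ∈ [1/L, 3/(2L)]; and h(t) = (Lt − 1)²/((Lt − 1)² + μ_p t(2 − Lt)) for t ∈ (3/(2L), 2/L). Then t⋆ = min{ 2/(L + √(L μ_p)), 3/(2L) } satisfies h(t⋆) ≤ h(t) for all t ∈ (0, 2/L). -/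

import Mathlib

open Set
open scoped RealInnerProductSpace

set_option maxHeartbeats 1000000 in
theorem stmt_5 (L μp : ℝ) (hL : 0 < L) (hμp : 0 < μp) (hμpL : μp ≤ L)
    (h : ℝ → ℝ)
    (hh1 : ∀ t ∈ Ioo 0 (1 / L),
      h t = ((μp * (1 - L * t) +
        Real.sqrt (L ^ 2 - L * μp ^ 2 * t * (2 - L * t))) / (L + μp)) ^ 2)
    (hh2 : ∀ t ∈ Icc (1 / L) (3 / (2 * L)),
      h t = 2 * μp * t * (2 - L * t) / ((L - μp) * t - 2) + 1)
    (hh3 : ∀ t ∈ Ioo (3 / (2 * L)) (2 / L),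
      h t = (L * t - 1) ^ 2 / ((L * t - 1) ^ 2 + μp * t * (2 - L * t))) :
    ∀ t ∈ Ioo 0 (2 / L),
      h (min (2 / (L + Real.sqrt (L * μp))) (3 / (2 * L))) ≤ h t := by
  have hLμp : (0:ℝ) ≤ L * μp := by positivity
  obtain ⟨s, hs_def⟩ : ∃ x, x = Real.sqrt (L * μp) := ⟨_, rfl⟩
  rw [← hs_def]
  have hs2 : s * s = L * μp := by rw [hs_def]; exact Real.mul_self_sqrt hLμp
  have hs_pos : 0 < s := by rw [hs_def]; exact Real.sqrt_pos.mpr (by positivity)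
  have hsL : s ≤ L := by nlinarith
  have hμs : μp ≤ s := by nlinarith
  have hLs : (0:ℝ) < L + s := by linarith
  have hLsne : L + s ≠ 0 := ne_of_gt hLs
  have hsμ : (0:ℝ) < s + μp := by linarith
  have hsμne : s + μp ≠ 0 := ne_of_gt hsμ
  have hLμ : (0:ℝ) < L + μp := by linarith
  have hL3μ : (0:ℝ) < L + 3*μp := by linarith
  -- region 1 lower bound
  have reg1 : ∀ t ∈ Ioo 0 (1 / L), (L - μp) / (L + μp) ≤ h t := by
    rintro t ⟨ht0, ht1⟩
    rw [hh1 t ⟨ht0, ht1⟩]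
    have hLt : L * t < 1 := by
      have := (lt_div_iff₀ hL).mp ht1; linarith
    have hE : L ^ 2 - μp ^ 2 ≤ L ^ 2 - L * μp ^ 2 * t * (2 - L * t) := by
      nlinarith [mul_nonneg (sq_nonneg μp) (sq_nonneg (L * t - 1))]
    have hE0 : (0:ℝ) ≤ L ^ 2 - μp ^ 2 := by nlinarith
    have hA : Real.sqrt (L ^ 2 - μp ^ 2) ≤ μp * (1 - L * t) +
        Real.sqrt (L ^ 2 - L * μp ^ 2 * t * (2 - L * t)) := by
      have h1 : 0 ≤ μp * (1 - L * t) := by nlinarith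
      have h2 := Real.sqrt_le_sqrt hE
      linarith
    have hsq : L ^ 2 - μp ^ 2 ≤ (μp * (1 - L * t) +
        Real.sqrt (L ^ 2 - L * μp ^ 2 * t * (2 - L * t))) ^ 2 := by
      calc L ^ 2 - μp ^ 2 = Real.sqrt (L ^ 2 - μp ^ 2) ^ 2 := (Real.sq_sqrt hE0).symm
        _ ≤ _ := by
            apply pow_le_pow_left₀ (Real.sqrt_nonneg _) hA
    calc (L - μp) / (L + μp) = (L ^ 2 - μp ^ 2) / (L + μp) ^ 2 := by
          rw [div_eq_div_iff (by positivity) (by positivity)]; ring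
      _ ≤ _ := by
          rw [div_pow]
          gcongr
  -- region 3 lower bound
  have reg3 : ∀ t ∈ Ioo (3 / (2 * L)) (2 / L), L / (L + 3 * μp) ≤ h t := by
    rintro t ⟨ht0, ht1⟩
    rw [hh3 t ⟨ht0, ht1⟩]
    have h1 : 3 < 2 * L * t := by
      have := (div_lt_iff₀ (by positivity : (0:ℝ) < 2 * L)).mp ht0; linarith
    have h2 : L * t < 2 := by
      have := (lt_div_iff₀ hL).mp ht1; linarith
    have hden : 0 < (L * t - 1) ^ 2 + μp * t * (2 - L * t) := by
      have ht0' : 0 < t := by nlinarith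
      have : 0 < μp * t * (2 - L * t) := by
        apply mul_pos (mul_pos hμp ht0'); nlinarith
      positivity
    rw [div_le_div_iff₀ (by positivity) hden]
    nlinarith [mul_nonneg (mul_nonneg hμp.le (by linarith : (0:ℝ) ≤ 2 * L * t - 3))
      (by nlinarith : (0:ℝ) ≤ 2 * L * t - 1)]
  -- region 2 generic facts
  have hreg2 : ∀ t, 1/L ≤ t → t ≤ 3/(2*L) →
      1 ≤ L * t ∧ 2 * L * t ≤ 3 ∧ 0 < t ∧ (L - μp) * t - 2 < 0 := by
    intro t ht1 ht2
    have htL : 1 ≤ L * t := by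
      have := (div_le_iff₀ hL).mp ht1; linarith
    have htL2 : 2 * L * t ≤ 3 := by
      have := (le_div_iff₀ (by positivity : (0:ℝ) < 2*L)).mp ht2; linarith
    have ht0 : 0 < t := by nlinarith
    exact ⟨htL, htL2, ht0, by nlinarith⟩
  have hd_mem : 3/(2*L) ∈ Icc (1/L) (3/(2*L)) := by
    constructor
    · rw [div_le_div_iff₀ hL (by positivity)]; linarith
    · exact le_refl _
  rcases le_total (2 / (L + s)) (3 / (2 * L)) with hcd | hdc
  · -- case A : t* = 2/(L+s)
    rw [min_eq_left hcd]
    have hc1 : 1/L ≤ 2/(L+s) := by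
      rw [div_le_div_iff₀ hL hLs]; linarith
    have hval : h (2/(L+s)) = 1 - 4*μp*s/((L+s)*(s+μp)) := by
      rw [hh2 _ ⟨hc1, hcd⟩]
      have hb : (L - μp) * (2/(L+s)) - 2 = -(2*(s+μp)/(L+s)) := by
        field_simp; ring
      have hbne : (L - μp) * (2/(L+s)) - 2 ≠ 0 := by
        rw [hb]
        have : 0 < 2*(s+μp)/(L+s) := by positivity
        linarith
      rw [hb, ← sub_eq_zero]
      field_simp
      ring
    have hB1 : h (2/(L+s)) ≤ (L - μp) / (L + μp) := by
      rw [hval, ← sub_nonneg]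
      have h2s : 2*s ≤ L + μp := by nlinarith [sq_nonneg (L - μp)]
      have heq : (L - μp) / (L + μp) - (1 - 4*μp*s/((L+s)*(s+μp)))
          = (4*μp*s*(L+μp) - 2*μp*(L+s)*(s+μp)) / ((L+μp)*((L+s)*(s+μp))) := by
        field_simp
        ring
      rw [heq]
      apply div_nonneg _ (by positivity)
      nlinarith [mul_nonneg (mul_nonneg hμp.le hs_pos.le) (by linarith : (0:ℝ) ≤ L + μp - 2*s)]
    have hB3 : h (2/(L+s)) ≤ L / (L + 3*μp) := by
      rw [hval, ← sub_nonneg]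
      have h6s : 6*s ≤ L + 9*μp := by nlinarith [sq_nonneg (L - 9*μp)]
      have heq : L / (L + 3*μp) - (1 - 4*μp*s/((L+s)*(s+μp)))
          = (4*μp*s*(L+3*μp) - 3*μp*(L+s)*(s+μp)) / ((L+3*μp)*((L+s)*(s+μp))) := by
        field_simp
        ring
      rw [heq]
      apply div_nonneg _ (by positivity)
      nlinarith [mul_nonneg (mul_nonneg hμp.le hs_pos.le) (by linarith : (0:ℝ) ≤ L + 9*μp - 6*s)]
    have hB2 : ∀ t ∈ Icc (1/L) (3/(2*L)), h (2/(L+s)) ≤ h t := by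
      rintro t ⟨ht1, ht2⟩
      rw [hh2 t ⟨ht1, ht2⟩, hval]
      obtain ⟨htL, htL2, ht0, hb⟩ := hreg2 t ht1 ht2
      have hbne : (L - μp) * t - 2 ≠ 0 := ne_of_lt hb
      rw [← sub_nonneg]
      have heq : 2 * μp * t * (2 - L * t) / ((L - μp) * t - 2) + 1 - (1 - 4*μp*s/((L+s)*(s+μp)))
          = (2 * μp * t * (2 - L * t) * ((L+s)*(s+μp)) + 4*μp*s*((L - μp) * t - 2))
            / (((L - μp) * t - 2) * ((L+s)*(s+μp))) := by
        have hDne : (L+s)*(s+μp) ≠ 0 := by positivity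
        rw [div_add_one hbne, one_sub_div hDne, div_sub_div _ _ hbne hDne]
        ring
      rw [heq]
      apply div_nonneg_of_nonpos
      · have hNm : 2 * μp * t * (2 - L * t) * ((L+s)*(s+μp)) + 4*μp*s*((L - μp) * t - 2)
            = -(2*μp*s*((L+s)*t - 2)^2) := by
          linear_combination (2*μp*t*(s*t - 2 + L*t)) * hs2
        rw [hNm]
        have : 0 ≤ 2*μp*s*((L+s)*t - 2)^2 := by positivity
        linarith
      · exact mul_nonpos_of_nonpos_of_nonneg hb.le (by positivity)
    rintro t ⟨ht0, ht2L⟩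
    rcases lt_or_ge t (1/L) with hr1 | hr1
    · exact le_trans hB1 (reg1 t ⟨ht0, hr1⟩)
    · rcases le_or_gt t (3/(2*L)) with hr2 | hr2
      · exact hB2 t ⟨hr1, hr2⟩
      · exact le_trans hB3 (reg3 t ⟨hr2, ht2L⟩)
  · -- case B : t* = 3/(2L)
    rw [min_eq_right hdc]
    have h3s : 3 * s ≤ L := by
      have := (div_le_div_iff₀ (by positivity : (0:ℝ) < 2*L) hLs).mp hdc
      linarith
    have h9 : 9 * μp ≤ L := by nlinarith
    have hval : h (3/(2*L)) = L / (L + 3*μp) := by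
      rw [hh2 _ hd_mem]
      have hb : ((L - μp) * (3 / (2 * L)) - 2) = -((L + 3*μp)/(2*L)) := by
        field_simp; ring
      have hbne : (L - μp) * (3 / (2 * L)) - 2 ≠ 0 := by
        rw [hb]
        have : 0 < (L + 3*μp)/(2*L) := by positivity
        linarith
      rw [div_add' _ _ _ hbne, div_eq_div_iff hbne (ne_of_gt hL3μ)]
      have h1 : (L:ℝ) ≠ 0 := ne_of_gt hL
      field_simp
      ring
    have hB1 : h (3/(2*L)) ≤ (L - μp) / (L + μp) := by
      rw [hval, div_le_div_iff₀ hL3μ hLμ]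
      nlinarith
    have hB2 : ∀ t ∈ Icc (1/L) (3/(2*L)), h (3/(2*L)) ≤ h t := by
      rintro t ⟨ht1, ht2⟩
      rw [hh2 t ⟨ht1, ht2⟩, hval]
      obtain ⟨htL, htL2, ht0, hb⟩ := hreg2 t ht1 ht2
      have hbne : (L - μp) * t - 2 ≠ 0 := ne_of_lt hb
      have hcne : L + 3*μp ≠ 0 := ne_of_gt hL3μ
      rw [← sub_nonneg]
      have heq : 2 * μp * t * (2 - L * t) / ((L - μp) * t - 2) + 1 - L / (L + 3 * μp)
          = (2 * μp * t * (2 - L * t) * (L + 3*μp) + 3*μp*((L - μp) * t - 2))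
            / (((L - μp) * t - 2) * (L + 3*μp)) := by
        rw [div_add_one hbne, div_sub_div _ _ hbne hcne]
        ring
      rw [heq]
      apply div_nonneg_of_nonpos
      · nlinarith [mul_nonneg (by linarith : (0:ℝ) ≤ 3 - 2*L*t)
          (by nlinarith : (0:ℝ) ≤ 2 - (L + 3*μp)*t), hμp.le]
      · exact mul_nonpos_of_nonpos_of_nonneg hb.le hL3μ.le
    rintro t ⟨ht0, ht2L⟩
    rcases lt_or_ge t (1/L) with hr1 | hr1
    · exact le_trans hB1 (reg1 t ⟨ht0, hr1⟩)
    · rcases le_or_gt t (3/(2*L)) with hr2 | hr2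
      · exact hB2 t ⟨hr1, hr2⟩
      · exact le_trans (le_of_eq hval) (reg3 t ⟨hr2, ht2L⟩)
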